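/- Let (r₁,r₂) ∈ ℚ² ∖ ℤ² and (s₁,s₂) ∈ ℤ². Then for every τ in the complex upper half-plane ℍ, g_{(r₁+s₁, r₂+s₂)}(τ) = (−1)^{s₁s₂+s₁+s₂} · e^{−πi(s₁r₂ − s₂r₁)} · g_{(r₁,r₂)}(τ). -/

import Mathlib

open Complex Filter

private lemma hasProdZero' {f : ℕ → ℂ} (h : ∃ n, f n = 0) : HasProd f 0 := by
  obtain ⟨n, hn⟩ := h
  rw [HasProd]
  have hev : ∀ᶠ s : Finset ℕ in atTop, ∏ i ∈ s, f i = 0 := by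
    filter_upwards [Filter.eventually_ge_atTop ({n} : Finset ℕ)] with s hs
    exact Finset.prod_eq_zero (hs (Finset.mem_singleton_self n)) hn
  exact Tendsto.congr' (hev.mono fun s hs => hs.symm) tendsto_const_nhds

private lemma mult0' (q c : ℂ) (hq : ‖q‖ < 1) :
    Multipliable (fun n : ℕ => 1 - q ^ n * c) := by
  by_cases h0 : ∃ n : ℕ, 1 - q ^ n * c = 0
  · exact ⟨0, hasProdZero' h0⟩
  · push_neg at h0
    have hg : Summable (fun n : ℕ => 3 / 2 * (‖c‖ * ‖q‖ ^ n)) :=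
      (((summable_geometric_of_lt_one (norm_nonneg q) hq).mul_left ‖c‖).mul_left _)
    have hsmall : ∀ᶠ n : ℕ in atTop, ‖c‖ * ‖q‖ ^ n ≤ 1 / 2 := by
      have ht : Tendsto (fun n : ℕ => ‖c‖ * ‖q‖ ^ n) atTop (nhds 0) := by
        simpa using (tendsto_pow_atTop_nhds_zero_of_norm_lt_one (by simpa using hq)).const_mul ‖c‖
      exact ht.eventually_le_const (by norm_num)
    have hsum : Summable (fun n : ℕ => Complex.log (1 - q ^ n * c)) := by
      apply hg.of_norm_bounded_eventually_nat
      filter_upwards [hsmall] with n hn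
      have hb : ‖-(q ^ n * c)‖ ≤ 1 / 2 := by
        rw [norm_neg, norm_mul, norm_pow]
        calc ‖q‖ ^ n * ‖c‖ = ‖c‖ * ‖q‖ ^ n := by ring
          _ ≤ 1 / 2 := hn
      have hlog := Complex.norm_log_one_add_half_le_self hb
      rw [show (1 : ℂ) + -(q ^ n * c) = 1 - q ^ n * c by ring] at hlog
      refine hlog.trans ?_
      rw [norm_neg, norm_mul, norm_pow]
      nlinarith [norm_nonneg q, norm_nonneg c, pow_nonneg (norm_nonneg q) n]
    have h := hsum.hasSum.cexp
    have heq : (Complex.exp ∘ fun n : ℕ => Complex.log (1 - q ^ n * c)) =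
        fun n : ℕ => 1 - q ^ n * c :=
      funext fun n => Complex.exp_log (h0 n)
    rw [heq] at h
    exact ⟨_, h⟩

private lemma multk' (q c : ℂ) (hq : ‖q‖ < 1) (k : ℕ) :
    Multipliable (fun n : ℕ => 1 - q ^ (n + k) * c) := by
  have := mult0' q (q ^ k * c) hq
  simpa [pow_add, mul_assoc] using this

private lemma keyProd' (q w : ℂ) (hq : ‖q‖ < 1) :
    (1 - q * w) * ∏' n : ℕ, ((1 - q ^ (n + 2) * w) * (1 - q ^ n * w⁻¹)) =
    (1 - w⁻¹) * ∏' n : ℕ, ((1 - q ^ (n + 1) * w) * (1 - q ^ (n + 1) * w⁻¹)) := by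
  have hA1 : Multipliable (fun n : ℕ => 1 - q ^ (n + 1) * w) := multk' q w hq 1
  have hA2 : Multipliable (fun n : ℕ => 1 - q ^ (n + 2) * w) := multk' q w hq 2
  have hB0 : Multipliable (fun n : ℕ => 1 - q ^ n * w⁻¹) := mult0' q w⁻¹ hq
  have hB1 : Multipliable (fun n : ℕ => 1 - q ^ (n + 1) * w⁻¹) := multk' q w⁻¹ hq 1
  have e2 : (fun n : ℕ => 1 - q ^ (n + 1 + 1) * w) = fun n : ℕ => 1 - q ^ (n + 2) * w := by
    funext n; norm_num
  rw [Multipliable.tprod_mul hA2 hB0, Multipliable.tprod_mul hA1 hB1]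
  have h1 : ∏' n : ℕ, (1 - q ^ (n + 1) * w) =
      (1 - q * w) * ∏' n : ℕ, (1 - q ^ (n + 2) * w) := by
    rw [tprod_eq_zero_mul' (f := fun n : ℕ => 1 - q ^ (n + 1) * w) (by rw [e2]; exact hA2),
      pow_one, e2]
  have h2 : ∏' n : ℕ, (1 - q ^ n * w⁻¹) =
      (1 - w⁻¹) * ∏' n : ℕ, (1 - q ^ (n + 1) * w⁻¹) := by
    rw [tprod_eq_zero_mul' (f := fun n : ℕ => 1 - q ^ n * w⁻¹) hB1, pow_zero, one_mul]
  rw [h1, h2]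
  ring

private lemma exp_neg_one_pow' (s : ℤ) :
    Complex.exp ((s : ℂ) * (Real.pi * Complex.I)) = (-1 : ℂ) ^ s := by
  rw [Complex.exp_int_mul, Complex.exp_pi_mul_I]

private lemma exp_add_int' (x : ℂ) (s : ℤ) :
    Complex.exp (2 * (Real.pi : ℂ) * Complex.I * (x + (s : ℂ))) =
      Complex.exp (2 * (Real.pi : ℂ) * Complex.I * x) := by
  rw [show 2 * (Real.pi : ℂ) * Complex.I * (x + (s : ℂ)) =
      2 * (Real.pi : ℂ) * Complex.I * x + (s : ℂ) * (2 * (Real.pi : ℂ) * Complex.I) by ring,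
    Complex.exp_add, Complex.exp_int_mul_two_pi_mul_I, mul_one]

private lemma qnorm' (τ : ℂ) (hτ : 0 < τ.im) :
    ‖Complex.exp (2 * (Real.pi : ℂ) * Complex.I * τ)‖ < 1 := by
  rw [Complex.norm_exp]
  have hre : (2 * (Real.pi : ℂ) * Complex.I * τ).re = -(2 * Real.pi * τ.im) := by
    simp [Complex.mul_re, Complex.mul_im]
  rw [hre, Real.exp_lt_one_iff]
  have := Real.pi_pos
  nlinarith

private lemma abstractStep' (Ea Eb Ea' Eb' X Y E₂ q w T T' : ℂ)
    (h1 : Ea' = Ea * X) (h2 : Eb' = Eb * Y) (h3 : X * Y = E₂ * w) (h4 : w * w⁻¹ = 1)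
    (hkey : (1 - q * w) * T' = (1 - w⁻¹) * T) :
    -Ea' * Eb' * (1 - q * w) * T' = -E₂ * (-Ea * Eb * (1 - w) * T) := by
  have hh : -Ea' * Eb' * (1 - q * w) * T' = (-Ea' * Eb') * ((1 - q * w) * T') := by ring
  rw [hh, hkey, h1, h2]
  linear_combination (-Ea * Eb * (1 - w⁻¹) * T) * h3 + (Ea * Eb * E₂ * T) * h4



/-- The Siegel function `g_{(r₁,r₂)}(τ)`, defined by the product expansion
`g_{(r₁,r₂)}(τ) = -q_τ^{B₂(r₁)/2} e^{πi r₂(r₁-1)} (1-q_z) ∏_{n≥1} (1-q_τ^n q_z)(1-q_τ^n q_z⁻¹)`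
where `B₂(X) = X² - X + 1/6`, `q_τ = e^{2πiτ}` and `q_z = e^{2πiz}` with `z = r₁τ + r₂`. -/
noncomputable def siegelG (r : ℚ × ℚ) (τ : ℂ) : ℂ :=
  -Complex.exp (2 * Real.pi * Complex.I * τ * (((r.1 : ℂ) ^ 2 - (r.1 : ℂ) + 1 / 6) / 2)) *
    Complex.exp (Real.pi * Complex.I * (r.2 : ℂ) * ((r.1 : ℂ) - 1)) *
    (1 - Complex.exp (2 * Real.pi * Complex.I * ((r.1 : ℂ) * τ + (r.2 : ℂ)))) *
    ∏' n : ℕ,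
      ((1 - Complex.exp (2 * Real.pi * Complex.I * (((n : ℂ) + 1) * τ + ((r.1 : ℂ) * τ + (r.2 : ℂ))))) *
        (1 - Complex.exp (2 * Real.pi * Complex.I * (((n : ℂ) + 1) * τ - ((r.1 : ℂ) * τ + (r.2 : ℂ))))))

private lemma siegelG_shift_fst_one (r₁ r₂ : ℚ) (τ : ℂ) (hτ : 0 < τ.im) :
    siegelG (r₁ + 1, r₂) τ =
      -Complex.exp (-(Real.pi * Complex.I * (r₂ : ℂ))) * siegelG (r₁, r₂) τ := by
  have hq := qnorm' τ hτ
  simp only [siegelG]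
  push_cast
  have hnew : ∀ n : ℕ,
      (1 - Complex.exp (2 * (Real.pi : ℂ) * Complex.I *
          (((n : ℂ) + 1) * τ + (((r₁ : ℂ) + 1) * τ + (r₂ : ℂ))))) *
      (1 - Complex.exp (2 * (Real.pi : ℂ) * Complex.I *
          (((n : ℂ) + 1) * τ - (((r₁ : ℂ) + 1) * τ + (r₂ : ℂ))))) =
      (1 - Complex.exp (2 * (Real.pi : ℂ) * Complex.I * τ) ^ (n + 2) *
        Complex.exp (2 * (Real.pi : ℂ) * Complex.I * ((r₁ : ℂ) * τ + (r₂ : ℂ)))) *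
      (1 - Complex.exp (2 * (Real.pi : ℂ) * Complex.I * τ) ^ n *
        (Complex.exp (2 * (Real.pi : ℂ) * Complex.I * ((r₁ : ℂ) * τ + (r₂ : ℂ))))⁻¹) := by
    intro n
    rw [show 2 * (Real.pi : ℂ) * Complex.I * (((n : ℂ) + 1) * τ + (((r₁ : ℂ) + 1) * τ + (r₂ : ℂ)))
        = ((n + 2 : ℕ) : ℂ) * (2 * (Real.pi : ℂ) * Complex.I * τ) +
          2 * (Real.pi : ℂ) * Complex.I * ((r₁ : ℂ) * τ + (r₂ : ℂ)) by push_cast; ring,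
      show 2 * (Real.pi : ℂ) * Complex.I * (((n : ℂ) + 1) * τ - (((r₁ : ℂ) + 1) * τ + (r₂ : ℂ)))
        = ((n : ℕ) : ℂ) * (2 * (Real.pi : ℂ) * Complex.I * τ) +
          -(2 * (Real.pi : ℂ) * Complex.I * ((r₁ : ℂ) * τ + (r₂ : ℂ))) by push_cast; ring,
      Complex.exp_add, Complex.exp_add, Complex.exp_nat_mul, Complex.exp_nat_mul,
      Complex.exp_neg]
  have hold : ∀ n : ℕ,
      (1 - Complex.exp (2 * (Real.pi : ℂ) * Complex.I *
          (((n : ℂ) + 1) * τ + ((r₁ : ℂ) * τ + (r₂ : ℂ))))) *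
      (1 - Complex.exp (2 * (Real.pi : ℂ) * Complex.I *
          (((n : ℂ) + 1) * τ - ((r₁ : ℂ) * τ + (r₂ : ℂ))))) =
      (1 - Complex.exp (2 * (Real.pi : ℂ) * Complex.I * τ) ^ (n + 1) *
        Complex.exp (2 * (Real.pi : ℂ) * Complex.I * ((r₁ : ℂ) * τ + (r₂ : ℂ)))) *
      (1 - Complex.exp (2 * (Real.pi : ℂ) * Complex.I * τ) ^ (n + 1) *
        (Complex.exp (2 * (Real.pi : ℂ) * Complex.I * ((r₁ : ℂ) * τ + (r₂ : ℂ))))⁻¹) := by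
    intro n
    rw [show 2 * (Real.pi : ℂ) * Complex.I * (((n : ℂ) + 1) * τ + ((r₁ : ℂ) * τ + (r₂ : ℂ)))
        = ((n + 1 : ℕ) : ℂ) * (2 * (Real.pi : ℂ) * Complex.I * τ) +
          2 * (Real.pi : ℂ) * Complex.I * ((r₁ : ℂ) * τ + (r₂ : ℂ)) by push_cast; ring,
      show 2 * (Real.pi : ℂ) * Complex.I * (((n : ℂ) + 1) * τ - ((r₁ : ℂ) * τ + (r₂ : ℂ)))
        = ((n + 1 : ℕ) : ℂ) * (2 * (Real.pi : ℂ) * Complex.I * τ) +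
          -(2 * (Real.pi : ℂ) * Complex.I * ((r₁ : ℂ) * τ + (r₂ : ℂ))) by push_cast; ring,
      Complex.exp_add, Complex.exp_add, Complex.exp_nat_mul,
      Complex.exp_neg]
  rw [tprod_congr hnew, tprod_congr hold,
    show 2 * (Real.pi : ℂ) * Complex.I * (((r₁ : ℂ) + 1) * τ + (r₂ : ℂ))
      = 2 * (Real.pi : ℂ) * Complex.I * τ +
        2 * (Real.pi : ℂ) * Complex.I * ((r₁ : ℂ) * τ + (r₂ : ℂ)) by ring,
    Complex.exp_add]
  exact abstractStep' _ _ _ _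
    (Complex.exp (2 * (Real.pi : ℂ) * Complex.I * ((r₁ : ℂ) * τ)))
    (Complex.exp ((Real.pi : ℂ) * Complex.I * (r₂ : ℂ))) _ _ _ _ _
    (by rw [← Complex.exp_add]; congr 1; push_cast; ring)
    (by rw [← Complex.exp_add]; congr 1; push_cast; ring)
    (by rw [← Complex.exp_add, ← Complex.exp_add]; congr 1; push_cast; ring)
    (mul_inv_cancel₀ (Complex.exp_ne_zero _))
    (keyProd' _ _ hq)

private lemma siegelG_shift_snd (r₁ r₂ : ℚ) (s₂ : ℤ) (τ : ℂ) :
    siegelG (r₁, r₂ + s₂) τ =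
      (-1 : ℂ) ^ s₂ * Complex.exp ((Real.pi : ℂ) * Complex.I * (s₂ : ℂ) * (r₁ : ℂ)) *
        siegelG (r₁, r₂) τ := by
  simp only [siegelG]
  push_cast
  have hterm : ∀ n : ℕ,
      (1 - Complex.exp (2 * (Real.pi : ℂ) * Complex.I *
          (((n : ℂ) + 1) * τ + ((r₁ : ℂ) * τ + ((r₂ : ℂ) + (s₂ : ℂ)))))) *
      (1 - Complex.exp (2 * (Real.pi : ℂ) * Complex.I *
          (((n : ℂ) + 1) * τ - ((r₁ : ℂ) * τ + ((r₂ : ℂ) + (s₂ : ℂ)))))) =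
      (1 - Complex.exp (2 * (Real.pi : ℂ) * Complex.I *
          (((n : ℂ) + 1) * τ + ((r₁ : ℂ) * τ + (r₂ : ℂ))))) *
      (1 - Complex.exp (2 * (Real.pi : ℂ) * Complex.I *
          (((n : ℂ) + 1) * τ - ((r₁ : ℂ) * τ + (r₂ : ℂ))))) := by
    intro n
    rw [show 2 * (Real.pi : ℂ) * Complex.I *
          (((n : ℂ) + 1) * τ + ((r₁ : ℂ) * τ + ((r₂ : ℂ) + (s₂ : ℂ)))) =
        2 * (Real.pi : ℂ) * Complex.I *
          ((((n : ℂ) + 1) * τ + ((r₁ : ℂ) * τ + (r₂ : ℂ))) + ((s₂ : ℤ) : ℂ)) by push_cast; ring,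
      exp_add_int',
      show 2 * (Real.pi : ℂ) * Complex.I *
          (((n : ℂ) + 1) * τ - ((r₁ : ℂ) * τ + ((r₂ : ℂ) + (s₂ : ℂ)))) =
        2 * (Real.pi : ℂ) * Complex.I *
          ((((n : ℂ) + 1) * τ - ((r₁ : ℂ) * τ + (r₂ : ℂ))) + ((-s₂ : ℤ) : ℂ)) by push_cast; ring,
      exp_add_int']
  have hz : (1 : ℂ) - Complex.exp (2 * (Real.pi : ℂ) * Complex.I *
        ((r₁ : ℂ) * τ + ((r₂ : ℂ) + (s₂ : ℂ)))) =
      1 - Complex.exp (2 * (Real.pi : ℂ) * Complex.I * ((r₁ : ℂ) * τ + (r₂ : ℂ))) := by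
    rw [show 2 * (Real.pi : ℂ) * Complex.I * ((r₁ : ℂ) * τ + ((r₂ : ℂ) + (s₂ : ℂ))) =
        2 * (Real.pi : ℂ) * Complex.I *
          (((r₁ : ℂ) * τ + (r₂ : ℂ)) + ((s₂ : ℤ) : ℂ)) by push_cast; ring,
      exp_add_int']
  have hpref : Complex.exp ((Real.pi : ℂ) * Complex.I * ((r₂ : ℂ) + (s₂ : ℂ)) * ((r₁ : ℂ) - 1)) =
      (-1 : ℂ) ^ s₂ * Complex.exp ((Real.pi : ℂ) * Complex.I * (s₂ : ℂ) * (r₁ : ℂ)) *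
        Complex.exp ((Real.pi : ℂ) * Complex.I * (r₂ : ℂ) * ((r₁ : ℂ) - 1)) := by
    rw [← exp_neg_one_pow' s₂, ← Complex.exp_add, ← Complex.exp_add,
      show (s₂ : ℂ) * ((Real.pi : ℂ) * Complex.I) +
          (Real.pi : ℂ) * Complex.I * (s₂ : ℂ) * (r₁ : ℂ) +
          (Real.pi : ℂ) * Complex.I * (r₂ : ℂ) * ((r₁ : ℂ) - 1) =
        (Real.pi : ℂ) * Complex.I * ((r₂ : ℂ) + (s₂ : ℂ)) * ((r₁ : ℂ) - 1) +
          ((s₂ : ℤ) : ℂ) * (2 * (Real.pi : ℂ) * Complex.I) by push_cast; ring,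
      Complex.exp_add, Complex.exp_int_mul_two_pi_mul_I, mul_one]
  rw [tprod_congr hterm, hz, hpref]
  ring

private lemma sign_step (r₂ : ℚ) (k : ℤ) :
    (-1 : ℂ) ^ (k + 1) *
        Complex.exp (-((Real.pi : ℂ) * Complex.I * ((k : ℂ) + 1) * (r₂ : ℂ))) =
      -Complex.exp (-((Real.pi : ℂ) * Complex.I * (r₂ : ℂ))) *
        ((-1 : ℂ) ^ k *
          Complex.exp (-((Real.pi : ℂ) * Complex.I * (k : ℂ) * (r₂ : ℂ)))) := by
  rw [zpow_add_one₀ (by norm_num : (-1 : ℂ) ≠ 0),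
    show -((Real.pi : ℂ) * Complex.I * ((k : ℂ) + 1) * (r₂ : ℂ)) =
      -((Real.pi : ℂ) * Complex.I * (r₂ : ℂ)) +
        -((Real.pi : ℂ) * Complex.I * (k : ℂ) * (r₂ : ℂ)) by ring,
    Complex.exp_add]
  ring

private lemma sign_step' (r₂ : ℚ) (k : ℤ) :
    (-1 : ℂ) ^ k *
        Complex.exp (-((Real.pi : ℂ) * Complex.I * (k : ℂ) * (r₂ : ℂ))) =
      -Complex.exp (-((Real.pi : ℂ) * Complex.I * (r₂ : ℂ))) *
        ((-1 : ℂ) ^ (k - 1) *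
          Complex.exp (-((Real.pi : ℂ) * Complex.I * ((k : ℂ) - 1) * (r₂ : ℂ)))) := by
  rw [zpow_sub_one₀ (by norm_num : (-1 : ℂ) ≠ 0),
    show -((Real.pi : ℂ) * Complex.I * (k : ℂ) * (r₂ : ℂ)) =
      -((Real.pi : ℂ) * Complex.I * (r₂ : ℂ)) +
        -((Real.pi : ℂ) * Complex.I * ((k : ℂ) - 1) * (r₂ : ℂ)) by ring,
    Complex.exp_add, inv_neg, inv_one]
  ring

private lemma siegelG_shift_fst (r₁ r₂ : ℚ) (s₁ : ℤ) (τ : ℂ) (hτ : 0 < τ.im) :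
    siegelG (r₁ + s₁, r₂) τ =
      (-1 : ℂ) ^ s₁ * Complex.exp (-((Real.pi : ℂ) * Complex.I * (s₁ : ℂ) * (r₂ : ℂ))) *
        siegelG (r₁, r₂) τ := by
  induction s₁ using Int.induction_on with
  | zero => simp
  | succ n ih =>
      push_cast at ih ⊢
      rw [show r₁ + ((n : ℚ) + 1) = (r₁ + (n : ℚ)) + 1 by ring,
        siegelG_shift_fst_one (r₁ + (n : ℚ)) r₂ τ hτ, ih]
      have hs := sign_step r₂ (n : ℤ)
      push_cast at hs
      rw [hs]
      ring
  | pred n ih =>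
      push_cast at ih ⊢
      have h1 := siegelG_shift_fst_one (r₁ + (-(n : ℚ) - 1)) r₂ τ hτ
      rw [show (r₁ + (-(n : ℚ) - 1)) + 1 = r₁ + -(n : ℚ) by ring, ih] at h1
      apply mul_left_cancel₀
        (show (-Complex.exp (-((Real.pi : ℂ) * Complex.I * (r₂ : ℂ)))) ≠ 0 from
          neg_ne_zero.mpr (Complex.exp_ne_zero _))
      rw [← h1]
      have hs := sign_step' r₂ (-(n : ℤ))
      push_cast at hs
      rw [hs]
      ring

/-- For `(r₁,r₂) ∈ ℚ² \ ℤ²`, `(s₁,s₂) ∈ ℤ²` and `τ ∈ ℍ`,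
`g_{(r₁+s₁, r₂+s₂)}(τ) = (-1)^{s₁s₂+s₁+s₂} e^{-πi(s₁r₂ - s₂r₁)} g_{(r₁,r₂)}(τ)`. -/
theorem siegelG_add_int (r₁ r₂ : ℚ)
    (hr : ¬((∃ a : ℤ, (a : ℚ) = r₁) ∧ (∃ b : ℤ, (b : ℚ) = r₂)))
    (s₁ s₂ : ℤ) (τ : UpperHalfPlane) :
    siegelG (r₁ + s₁, r₂ + s₂) (τ : ℂ) =
      (-1 : ℂ) ^ (s₁ * s₂ + s₁ + s₂) *
        Complex.exp (-(Real.pi * Complex.I * ((s₁ : ℂ) * (r₂ : ℂ) - (s₂ : ℂ) * (r₁ : ℂ)))) *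
        siegelG (r₁, r₂) (τ : ℂ) := by
  have hτ : 0 < (τ : ℂ).im := τ.2
  rw [siegelG_shift_snd (r₁ + s₁) r₂ s₂ (τ : ℂ), siegelG_shift_fst r₁ r₂ s₁ (τ : ℂ) hτ]
  push_cast
  rw [← exp_neg_one_pow' s₂, ← exp_neg_one_pow' s₁, ← exp_neg_one_pow' (s₁ * s₂ + s₁ + s₂)]
  have hmul : ∀ x y : ℂ, Complex.exp x * Complex.exp y = Complex.exp (x + y) :=
    fun x y => (Complex.exp_add x y).symm
  have hmul' : ∀ x y z : ℂ, Complex.exp x * (Complex.exp y * z) = Complex.exp (x + y) * z :=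
    fun x y z => by rw [← mul_assoc, hmul]
  simp only [mul_assoc, hmul, hmul']
  congr 2
  push_cast
  ring
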